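/- arXiv:1305.7004 — 3 statements merged into one kernel-verified Lean document; each statement's English description precedes it below -/
import Mathlib

section
/- Let R be a commutative Noetherian ring, n a nonnegative integer, and M an R-module in dimension < n. Then the set of associated primes p of M with dim R/p ≥ n is finite. -/
open CategoryTheory

universe u

/-- An `R`-module `M` is *in dimension `< n`* if there is a finitely generated submodule `N`
of `M` such that the Krull dimension of `Supp (M/N)` is `< n`. -/
def InDimLT (R : Type u) [CommRing R] (M : Type u) [AddCommGroup M] [Module R M]
    (n : ℕ) : Prop :=
  ∃ N : Submodule R M, N.FG ∧
    Order.krullDim (Module.support R (M ⧸ N)) < (n : WithBot ℕ∞)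

/-- `f_a(M)`: the least `i` such that `H^i_a(M)` is not finitely generated (`⊤` if none). -/
noncomputable def fDim (R : Type u) [CommRing R] (a : Ideal R)
    (M : Type u) [AddCommGroup M] [Module R M] : ℕ∞ :=
  sInf {i : ℕ∞ | ∃ j : ℕ, i = j ∧
    ¬ Module.Finite R ((localCohomology a j).obj (ModuleCat.of R M))}

/-- `f^n_a(M) = inf { f_{aR_p}(M_p) : p ∈ Supp(M/aM), dim R/p ≥ n }`. -/
noncomputable def fDimN (R : Type u) [CommRing R] (a : Ideal R)
    (M : Type u) [AddCommGroup M] [Module R M] (n : ℕ) : ℕ∞ :=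
  sInf {i : ℕ∞ | ∃ p : PrimeSpectrum R,
    p ∈ Module.support R (M ⧸ (a • ⊤ : Submodule R M)) ∧
    (n : WithBot ℕ∞) ≤ ringKrullDim (R ⧸ p.asIdeal) ∧
    i = fDim (Localization.AtPrime p.asIdeal)
          (a.map (algebraMap R (Localization.AtPrime p.asIdeal)))
          (LocalizedModule p.asIdeal.primeCompl M)}

/-- `h^n_a(M)`: the least `i` such that `H^i_a(M)` is not in dimension `< n` (`⊤` if none). -/
noncomputable def hDim (R : Type u) [CommRing R] (a : Ideal R)
    (M : Type u) [AddCommGroup M] [Module R M] (n : ℕ) : ℕ∞ :=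
  sInf {i : ℕ∞ | ∃ j : ℕ, i = j ∧
    ¬ InDimLT R ((localCohomology a j).obj (ModuleCat.of R M)) n}

section AuxAssPrimes

variable {R M : Type u} [CommRing R] [AddCommGroup M] [Module R M]

lemma ass_subset_insert_of_isAssociatedPrime [IsNoetherianRing R] {p : Ideal R} {x : M}
    (hp1 : p.IsPrime) (hx : p = Submodule.colon ⊥ {x}) :
    associatedPrimes R M ⊆ insert p (associatedPrimes R (M ⧸ (R ∙ x))) := by
  rintro q hq'
  obtain ⟨hq, y, hy⟩ := isAssociatedPrime_iff.mp hq'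
  have memp : ∀ c : R, c ∈ p ↔ c • x = 0 := fun c => by
    rw [hx, Submodule.mem_colon_singleton, Submodule.mem_bot]
  have memq : ∀ c : R, c ∈ q ↔ c • y = 0 := fun c => by
    rw [hy, Submodule.mem_colon_singleton, Submodule.mem_bot]
  by_cases hc : ∃ r : R, r • y ∈ (R ∙ x) ∧ r • y ≠ 0
  · obtain ⟨r, hrm, hr0⟩ := hc
    obtain ⟨s, hs⟩ := Submodule.mem_span_singleton.mp hrm
    have hrq : r ∉ q := fun h => hr0 ((memq r).mp h)
    have hsp : s ∉ p := fun h => hr0 (hs ▸ (memp s).mp h)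
    left
    ext c
    constructor
    · intro h
      have h1 : (c * s) • x = 0 := by
        rw [mul_smul, hs, smul_comm, (memq c).mp h, smul_zero]
      rcases hp1.mem_or_mem ((memp _).mpr h1) with h' | h'
      · exact h'
      · exact absurd h' hsp
    · intro h
      have h1 : (c * r) • y = 0 := by
        rw [mul_smul, ← hs, smul_comm, (memp c).mp h, smul_zero]
      rcases hq.mem_or_mem ((memq _).mpr h1) with h' | h'
      · exact h'
      · exact absurd h' hrq
  · push_neg at hc
    right
    refine isAssociatedPrime_iff.mpr ⟨hq, Submodule.Quotient.mk y, ?_⟩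
    ext c
    rw [memq c, Submodule.mem_colon_singleton, Submodule.mem_bot,
      ← Submodule.Quotient.mk_smul, Submodule.Quotient.mk_eq_zero]
    constructor
    · intro h; rw [h]; exact zero_mem _
    · intro h; exact hc c h

lemma isAssociatedPrime_submodule_or [IsNoetherianRing R] {p : Ideal R} (N : Submodule R M)
    (hp : IsAssociatedPrime p M) :
    IsAssociatedPrime p N ∨ IsAssociatedPrime p (M ⧸ N) := by
  obtain ⟨hp1, x, hx⟩ := isAssociatedPrime_iff.mp hp
  have memp : ∀ c : R, c ∈ p ↔ c • x = 0 := fun c => by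
    rw [hx, Submodule.mem_colon_singleton, Submodule.mem_bot]
  by_cases hc : ∃ r : R, r • x ∈ N ∧ r • x ≠ 0
  · obtain ⟨r, hrm, hr0⟩ := hc
    have hrp : r ∉ p := fun h => hr0 ((memp r).mp h)
    left
    refine isAssociatedPrime_iff.mpr ⟨hp1, ⟨r • x, hrm⟩, ?_⟩
    ext c
    rw [Submodule.mem_colon_singleton, Submodule.mem_bot]
    have hco : (c • (⟨r • x, hrm⟩ : N) = 0) ↔ c • (r • x) = 0 := by
      rw [Subtype.ext_iff]; rfl
    rw [hco, memp c]
    constructor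
    · intro h; rw [smul_comm, h, smul_zero]
    · intro h
      have h1 : (c * r) • x = 0 := by rw [mul_smul]; exact h
      rcases hp1.mem_or_mem ((memp _).mpr h1) with h' | h'
      · exact (memp c).mp h'
      · exact absurd h' hrp
  · push_neg at hc
    right
    refine isAssociatedPrime_iff.mpr ⟨hp1, Submodule.Quotient.mk x, ?_⟩
    ext c
    rw [memp c, Submodule.mem_colon_singleton, Submodule.mem_bot,
      ← Submodule.Quotient.mk_smul, Submodule.Quotient.mk_eq_zero]
    exact ⟨fun h => by rw [h]; exact zero_mem _, fun h => hc c h⟩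

lemma associatedPrimes_finite_of_isNoetherian (R M : Type u) [CommRing R]
    [IsNoetherianRing R] [AddCommGroup M] [Module R M] [IsNoetherian R M] :
    (associatedPrimes R M).Finite := by
  have H : ∀ K : Submodule R M, (associatedPrimes R (M ⧸ K)).Finite := by
    intro K
    induction K using IsNoetherian.induction with
    | _ K IH =>
      rcases subsingleton_or_nontrivial (M ⧸ K) with h | h
      · rw [associatedPrimes.eq_empty_of_subsingleton]; exact Set.finite_empty
      · obtain ⟨p, hp⟩ := associatedPrimes.nonempty R (M ⧸ K)
        obtain ⟨hp1, x, hx⟩ := isAssociatedPrime_iff.mp hp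
        have hx0 : x ≠ 0 := by
          rintro rfl
          exact hp1.ne_top (by ext c; simp [hx, Submodule.mem_colon_singleton])
        set K' := Submodule.comap K.mkQ (R ∙ x) with hK'
        have hle : K ≤ K' := fun y hy => by
          show K.mkQ y ∈ (R ∙ x)
          rw [Submodule.mkQ_apply, (Submodule.Quotient.mk_eq_zero K).mpr hy]
          exact zero_mem _
        obtain ⟨y, hy⟩ := Submodule.mkQ_surjective K x
        have hlt : K < K' := lt_of_le_of_ne hle (fun he => hx0 (by
          rw [← hy, Submodule.mkQ_apply, Submodule.Quotient.mk_eq_zero]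
          have : y ∈ K' := by
            show K.mkQ y ∈ (R ∙ x)
            rw [hy]; exact Submodule.mem_span_singleton_self x
          rwa [← he] at this))
        have hmap : Submodule.map K.mkQ K' = (R ∙ x) := by
          rw [hK', Submodule.map_comap_eq, Submodule.range_mkQ, top_inf_eq]
        have e : ((M ⧸ K) ⧸ (R ∙ x)) ≃ₗ[R] M ⧸ K' := by
          rw [← hmap]
          exact Submodule.quotientQuotientEquivQuotient K K' hle
        have hfin : (associatedPrimes R ((M ⧸ K) ⧸ (R ∙ x))).Finite := by
          rw [LinearEquiv.AssociatedPrimes.eq e]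
          exact IH K' hlt
        exact (hfin.insert p).subset (ass_subset_insert_of_isAssociatedPrime hp1 hx)
  have e : (M ⧸ (⊥ : Submodule R M)) ≃ₗ[R] M := Submodule.quotEquivOfEqBot ⊥ rfl
  rw [← LinearEquiv.AssociatedPrimes.eq e]
  exact H ⊥

theorem assPrimes_finite_aux (R M : Type u) [CommRing R] [IsNoetherianRing R]
    [AddCommGroup M] [Module R M] (n : ℕ)
    (h : ∃ N : Submodule R M, N.FG ∧
      Order.krullDim (Module.support R (M ⧸ N)) < (n : WithBot ℕ∞)) :
    {p ∈ associatedPrimes R M | (n : WithBot ℕ∞) ≤ ringKrullDim (R ⧸ p)}.Finite := by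
  obtain ⟨N, hfg, hdim⟩ := h
  have : IsNoetherian R ↥N := isNoetherian_of_fg_of_noetherian N hfg
  refine (associatedPrimes_finite_of_isNoetherian R ↥N).subset ?_
  rintro p ⟨hass, hdimp⟩
  rcases isAssociatedPrime_submodule_or N hass with h1 | h1
  · exact h1
  · exfalso
    have hprime : p.IsPrime := h1.isPrime
    have hsupp : ∀ q : PrimeSpectrum R, p ≤ q.asIdeal →
        q ∈ Module.support R (M ⧸ N) := by
      intro q hq
      rw [Module.mem_support_iff_exists_annihilator]
      obtain ⟨_, x, hx⟩ := isAssociatedPrime_iff.mp h1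
      exact ⟨x, fun c hc => hq (by
        rw [hx, Submodule.mem_colon_singleton, Submodule.mem_bot]; exact (Submodule.mem_annihilator_span_singleton x c).mp hc)⟩
    have key : ringKrullDim (R ⧸ p) ≤ Order.krullDim (Module.support R (M ⧸ N)) := by
      refine Order.krullDim_le_of_strictMono
        (fun q : PrimeSpectrum (R ⧸ p) =>
          (⟨PrimeSpectrum.comap (Ideal.Quotient.mk p) q,
            hsupp _ (by
              intro a ha
              show Ideal.Quotient.mk p a ∈ q.asIdeal
              rw [Ideal.Quotient.eq_zero_iff_mem.mpr ha]
              exact q.asIdeal.zero_mem)⟩ :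
            Module.support R (M ⧸ N))) ?_
      intro a b hab
      rw [Subtype.mk_lt_mk]
      refine lt_of_le_of_ne ?_ ?_
      · rw [← PrimeSpectrum.asIdeal_le_asIdeal]
        exact Ideal.comap_mono ((PrimeSpectrum.asIdeal_le_asIdeal _ _).mpr hab.le)
      · intro he
        exact hab.ne (PrimeSpectrum.comap_injective_of_surjective _
          Ideal.Quotient.mk_surjective he)
    exact absurd (lt_of_le_of_lt (hdimp.trans key) hdim) (lt_irrefl _)

end AuxAssPrimes

theorem assPrimes_finite_of_inDimLT (R M : Type u) [CommRing R] [IsNoetherianRing R]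
    [AddCommGroup M] [Module R M] (n : ℕ) (h : InDimLT R M n) :
    {p ∈ associatedPrimes R M | (n : WithBot ℕ∞) ≤ ringKrullDim (R ⧸ p)}.Finite :=
  assPrimes_finite_aux R M n h
end

section
/- (Countable prime avoidance) Let R be a Noetherian ring which is complete local (or more generally, let R be a Noetherian complete local ring). If p is a prime ideal and {q_k}_{k=1}^∞ is a countable family of prime ideals with p ⊆ ⋃_{k=1}^∞ q_k, then p ⊆ q_k for some k. -/
open CategoryTheory

universe u

theorem countable_prime_avoidance (R : Type u) [CommRing R] [IsNoetherianRing R]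
    [IsLocalRing R] [IsAdicComplete (IsLocalRing.maximalIdeal R) R]
    (p : Ideal R) (hp : p.IsPrime) (q : ℕ → Ideal R) (hq : ∀ k, (q k).IsPrime)
    (hsub : (p : Set R) ⊆ ⋃ k, (q k : Set R)) :
    ∃ k, p ≤ q k := by
  by_contra hcon
  push_neg at hcon
  set m := IsLocalRing.maximalIdeal R with hm
  -- every proper ideal is closed in the m-adic topology
  have closedA : ∀ J : Ideal R, J ≠ ⊤ → ∀ a : R, (∀ n : ℕ, a ∈ J ⊔ m ^ n) → a ∈ J := by
    intro J hJ a ha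
    let π := Ideal.Quotient.mk J
    have hsurj : Function.Surjective π := Ideal.Quotient.mk_surjective
    haveI : Nontrivial (R ⧸ J) := Ideal.Quotient.nontrivial_iff.mpr hJ
    haveI : IsLocalRing (R ⧸ J) := IsLocalRing.of_surjective' π hsurj
    have hne : Ideal.map π m ≠ ⊤ := by
      intro htop
      have h1 : (1 : R ⧸ J) ∈ Ideal.map π m := htop ▸ Submodule.mem_top
      obtain ⟨y, hy, hy1⟩ := (Ideal.mem_map_iff_of_surjective π hsurj).mp h1
      have : y - 1 ∈ J := by
        rw [← Ideal.Quotient.eq_zero_iff_mem, map_sub, hy1, map_one, sub_self]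
      have h1m : (1 : R) ∈ m := by
        have := m.sub_mem hy (IsLocalRing.le_maximalIdeal hJ this)
        simpa using this
      exact (IsLocalRing.maximalIdeal.isMaximal R).ne_top (Ideal.eq_top_of_isUnit_mem _ h1m isUnit_one)
    have hbot : (⨅ i : ℕ, Ideal.map π m ^ i) = ⊥ :=
      Ideal.iInf_pow_eq_bot_of_isLocalRing _ hne
    have hmem : π a ∈ (⨅ i : ℕ, Ideal.map π m ^ i) := by
      rw [Ideal.mem_iInf]
      intro n
      have : π a ∈ Ideal.map π (J ⊔ m ^ n) := Ideal.mem_map_of_mem π (ha n)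
      rwa [Ideal.map_sup, Ideal.map_quotient_self, bot_sup_eq, Ideal.map_pow] at this
    rw [hbot, Ideal.mem_bot] at hmem
    rwa [← Ideal.Quotient.eq_zero_iff_mem]
  have closedA' : ∀ J : Ideal R, J ≠ ⊤ → ∀ a : R, a ∉ J → ∃ N : ℕ, ∀ t ≥ N, a ∉ J ⊔ m ^ t := by
    intro J hJ a haJ
    by_contra hcc
    push_neg at hcc
    refine haJ (closedA J hJ a fun n => ?_)
    obtain ⟨t, ht, hat⟩ := hcc n
    exact sup_le_sup_left (Ideal.pow_le_pow_right ht) J hat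
  have hpm : p ≤ m := IsLocalRing.le_maximalIdeal hp.ne_top
  -- the key avoidance step
  have key : ∀ (n : ℕ) (a : R), a ∈ p → (∀ i < n, a ∉ q i) → ∀ t : ℕ,
      ∃ a', a' ∈ p ∧ a' - a ∈ m ^ t ∧ ∀ i < n + 1, a' ∉ q i := by
    intro n a hap hav t
    by_cases han : a ∈ q n
    · have hqn := hq n
      obtain ⟨z, hzp, hzn⟩ := SetLike.not_le_iff_exists.mp (hcon n)
      have hmn : ¬ m ≤ q n := fun h => hcon n (hpm.trans h)
      obtain ⟨u, hum, hun⟩ := SetLike.not_le_iff_exists.mp hmn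
      have hc : ∀ i : ℕ, ∃ x : R, (¬ q i ≤ q n → x ∈ q i) ∧ x ∉ q n := by
        intro i
        by_cases h : q i ≤ q n
        · exact ⟨1, fun h' => absurd h h', fun h1 => hqn.ne_top (Ideal.eq_top_of_isUnit_mem _ h1 isUnit_one)⟩
        · obtain ⟨x, hx, hxn⟩ := SetLike.not_le_iff_exists.mp h
          exact ⟨x, fun _ => hx, hxn⟩
      choose c hc1 hc2 using hc
      set d := ∏ i ∈ Finset.range n, c i with hd
      have hdn : d ∉ q n := by
        intro hmem
        haveI := hqn
        obtain ⟨i, _, hi⟩ := Ideal.IsPrime.prod_mem_iff.mp hmem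
        exact hc2 i hi
      set y := z * (u ^ t * d) with hy
      have hyt : y ∈ m ^ t := Ideal.mul_mem_left _ _ (Ideal.mul_mem_right _ _ (Ideal.pow_mem_pow hum t))
      have hyp : y ∈ p := Ideal.mul_mem_right _ _ hzp
      have hyn : y ∉ q n := by
        intro hmem
        rcases hqn.mem_or_mem hmem with h | h
        · exact hzn h
        rcases hqn.mem_or_mem h with h' | h'
        · exact hun (hqn.mem_of_pow_mem t h')
        · exact hdn h'
      refine ⟨a + y, p.add_mem hap hyp, by simpa using hyt, ?_⟩
      intro i hi
      rcases Nat.lt_succ_iff_lt_or_eq.mp hi with hi | rfl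
      · by_cases hins : q i ≤ q n
        · intro hmem
          have : y ∈ q n := by
            have : y = (a + y) - a := by ring
            rw [this]
            exact (q n).sub_mem (hins hmem) han
          exact hyn this
        · intro hmem
          apply hav i hi
          have hdi : d ∈ q i := by
            obtain ⟨e, he⟩ := Finset.dvd_prod_of_mem c (Finset.mem_range.mpr hi)
            rw [hd, he]
            exact Ideal.mul_mem_right _ _ (hc1 i hins)
          have hyi : y ∈ q i := Ideal.mul_mem_left _ _ (Ideal.mul_mem_left _ _ hdi)
          have : a = (a + y) - y := by ring
          rw [this]
          exact (q i).sub_mem hmem hyi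
      · intro hmem
        apply hyn
        have h2 := sub_mem hmem han
        simpa using h2
    · refine ⟨a, hap, by simp, fun i hi => ?_⟩
      rcases Nat.lt_succ_iff_lt_or_eq.mp hi with hi | rfl
      · exact hav i hi
      · exact han
  -- the invariant carried through the recursion
  set Inv : ℕ → R × ℕ → Prop := fun n z => z.1 ∈ p ∧ n ≤ z.2 ∧ ∀ i < n, z.1 ∉ q i ⊔ m ^ z.2
    with hInvDef
  have step2 : ∀ (n : ℕ) (z : R × ℕ), Inv n z →
      ∃ z' : R × ℕ, Inv (n + 1) z' ∧ z'.1 - z.1 ∈ m ^ z.2 ∧ z.2 ≤ z'.2 := by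
    rintro n ⟨a, t⟩ ⟨hap, hnt, hav⟩
    have hav' : ∀ i < n, a ∉ q i := fun i hi hmem => hav i hi (Ideal.mem_sup_left hmem)
    obtain ⟨a', ha'p, ha'd, ha'av⟩ := key n a hap hav' t
    have hN : ∀ i : ℕ, i < n + 1 → ∃ N : ℕ, ∀ t' ≥ N, a' ∉ q i ⊔ m ^ t' := by
      intro i hi
      exact closedA' (q i) (hq i).ne_top a' (ha'av i hi)
    have : ∃ t' : ℕ, n + 1 ≤ t' ∧ t ≤ t' ∧ ∀ i < n + 1, a' ∉ q i ⊔ m ^ t' := by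
      have hex : ∀ i : ℕ, ∃ N : ℕ, i < n + 1 → ∀ t' ≥ N, a' ∉ q i ⊔ m ^ t' := by
        intro i
        by_cases hi : i < n + 1
        · obtain ⟨N, hNs⟩ := hN i hi
          exact ⟨N, fun _ => hNs⟩
        · exact ⟨0, fun h => absurd h hi⟩
      choose Nf hNf using hex
      refine ⟨max (max (n + 1) t) ((Finset.range (n + 1)).sup Nf), ?_, ?_, ?_⟩
      · exact le_trans (le_max_left _ _) (le_max_left _ _)
      · exact le_trans (le_max_right _ _) (le_max_left _ _)
      · intro i hi
        apply hNf i hi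
        exact le_trans (Finset.le_sup (Finset.mem_range.mpr hi)) (le_max_right _ _)
    obtain ⟨t', ht'1, ht'2, ht'3⟩ := this
    exact ⟨(a', t'), ⟨ha'p, ht'1, ht'3⟩, ha'd, ht'2⟩
  choose F hF using step2
  have hInv0 : Inv 0 ((0 : R), 0) :=
    ⟨p.zero_mem, le_refl 0, fun i hi => absurd hi (Nat.not_lt_zero i)⟩
  let g : (n : ℕ) → {z : R × ℕ // Inv n z} := fun n =>
    Nat.rec ⟨((0 : R), 0), hInv0⟩ (fun k ih => ⟨F k ih.1 ih.2, (hF k ih.1 ih.2).1⟩) n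
  set x : ℕ → R := fun n => (g n).1.1 with hxdef
  set s : ℕ → ℕ := fun n => (g n).1.2 with hsdef
  have hInvn : ∀ n, x n ∈ p ∧ n ≤ s n ∧ ∀ i < n, x n ∉ q i ⊔ m ^ s n := fun n => (g n).2
  have hrel : ∀ n, x (n + 1) - x n ∈ m ^ s n ∧ s n ≤ s (n + 1) := fun n =>
    (hF n (g n).1 (g n).2).2
  have smono : Monotone s := monotone_nat_of_le_succ fun n => (hrel n).2
  have hdiff : ∀ n k, n ≤ k → x k - x n ∈ m ^ s n := by
    intro n k hnk
    induction k, hnk using Nat.le_induction with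
    | base => simp
    | succ k hnk ih =>
      have h1 : x (k + 1) - x n = (x (k + 1) - x k) + (x k - x n) := by ring
      rw [h1]
      exact (m ^ s n).add_mem (Ideal.pow_le_pow_right (smono hnk) (hrel k).1) ih
  have hsmul : ∀ n : ℕ, (m ^ n • ⊤ : Submodule R R) = m ^ n := by
    intro n
    rw [smul_eq_mul, Ideal.mul_top]
  have hcauchy : ∀ {a b : ℕ}, a ≤ b → x a ≡ x b [SMOD (m ^ a • ⊤ : Submodule R R)] := by
    intro a b hab
    rw [SModEq.sub_mem, hsmul]
    have : x a - x b = -(x b - x a) := by ring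
    rw [this]
    exact (m ^ a).neg_mem (Ideal.pow_le_pow_right (hInvn a).2.1 (hdiff a b hab))
  obtain ⟨L, hL⟩ := IsPrecomplete.prec (IsAdicComplete.toIsPrecomplete (I := m) (M := R)) hcauchy
  have hL' : ∀ n, x n - L ∈ m ^ n := by
    intro n
    have := hL n
    rwa [SModEq.sub_mem, hsmul] at this
  have hLdiff : ∀ n, L - x n ∈ m ^ s n := by
    intro n
    have h1 : L - x n = -(x (s n) - L) + (x (s n) - x n) := by ring
    rw [h1]
    exact (m ^ s n).add_mem ((m ^ s n).neg_mem (hL' (s n))) (hdiff n (s n) (hInvn n).2.1)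
  have hLp : L ∈ p := by
    apply closedA p hp.ne_top
    intro n
    have : L = x n + (L - x n) := by ring
    rw [this]
    exact Submodule.add_mem _ (Ideal.mem_sup_left (hInvn n).1)
      (Ideal.mem_sup_right (Ideal.pow_le_pow_right (hInvn n).2.1 (hLdiff n)))
  obtain ⟨S, ⟨k, hk⟩, hLS⟩ := hsub hLp
  apply (hInvn (k + 1)).2.2 k (Nat.lt_succ_self k)
  have : x (k + 1) = L + -(L - x (k + 1)) := by ring
  rw [this]
  refine Submodule.add_mem _ (Ideal.mem_sup_left ?_) (Ideal.mem_sup_right ((m ^ s (k + 1)).neg_mem (hLdiff (k + 1))))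
  rw [← hk] at hLS
  exact hLS
end

section
/- Let R be a commutative Noetherian ring, n a nonnegative integer, a an ideal, and X an R-module in dimension < n. Then for every m ∈ ℕ, the submodule (0 :_X a^m) is in dimension < n. -/
open CategoryTheory

universe u

theorem torsionBySet_inDimLT' (R X : Type u) [CommRing R] [IsNoetherianRing R]
    [AddCommGroup X] [Module R X] (a : Ideal R) (n m : ℕ)
    (h : ∃ N : Submodule R X, N.FG ∧
      Order.krullDim (Module.support R (X ⧸ N)) < (n : WithBot ℕ∞)) :
    ∃ N : Submodule R (Submodule.torsionBySet R X ((a ^ m : Ideal R) : Set R)), N.FG ∧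
      Order.krullDim (Module.support R
        ((Submodule.torsionBySet R X ((a ^ m : Ideal R) : Set R)) ⧸ N)) < (n : WithBot ℕ∞) := by
  obtain ⟨N, hNfg, hNdim⟩ := h
  set T := Submodule.torsionBySet R X ((a ^ m : Ideal R) : Set R)
  refine ⟨N.comap T.subtype, ?_, ?_⟩
  · -- N.comap T.subtype is FG
    have : IsNoetherian R N := isNoetherian_of_fg_of_noetherian _ hNfg
    have h1 : ((N ⊓ T).comap N.subtype).FG := IsNoetherian.noetherian _
    have h2 : (N ⊓ T).FG := by
      have := h1.map N.subtype
      rwa [Submodule.map_comap_subtype, inf_of_le_right inf_le_left] at this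
    apply Submodule.fg_of_fg_map_injective T.subtype T.injective_subtype
    rwa [Submodule.map_comap_subtype, inf_comm]
  · -- dimension bound
    refine lt_of_le_of_lt ?_ hNdim
    -- T ⧸ comap embeds into X ⧸ N
    have hker : LinearMap.ker (N.mkQ.comp T.subtype) = N.comap T.subtype := by
      ext x; simp [Submodule.mkQ]
    let f : (T ⧸ N.comap T.subtype) →ₗ[R] X ⧸ N :=
      Submodule.liftQ _ (N.mkQ.comp T.subtype) hker.ge
    have hf : Function.Injective f := by
      rw [← LinearMap.ker_eq_bot]
      exact Submodule.ker_liftQ_eq_bot _ _ hker.ge hker.le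
    have hsub : Module.support R (T ⧸ N.comap T.subtype) ⊆ Module.support R (X ⧸ N) :=
      Module.support_subset_of_injective f hf
    exact Order.krullDim_le_of_strictMono (Set.inclusion hsub) (fun a b hab => hab)

theorem torsionBySet_inDimLT (R X : Type u) [CommRing R] [IsNoetherianRing R]
    [AddCommGroup X] [Module R X] (a : Ideal R) (n m : ℕ)
    (h : InDimLT R X n) :
    InDimLT R (Submodule.torsionBySet R X ((a ^ m : Ideal R) : Set R)) n :=
  torsionBySet_inDimLT' R X a n m h
end
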